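/- arXiv:2503.00048 — 11 statements merged into one kernel-verified Lean document; each statement's English description precedes it below -/
import Mathlib

section
/- Let Q, T, I, V, Z : ℝ → ℝ be differentiable functions satisfying, for all t ≥ 0, the system Q'(t) = Λ + ϱ·T(t) − σ·Q(t) − μ₁·Q(t), T'(t) = σ·Q(t) − β·T(t)·V(t) − ϱ·T(t) − μ₂·T(t), I'(t) = β·T(t)·V(t) − μ₃·I(t) − p·I(t)·Z(t), V'(t) = ξ·I(t) − μ₄·V(t), Z'(t) = b + c·I(t)·Z(t)/(κ + I(t)) − μ₅·Z(t). If Q(0) ≥ 0, T(0) ≥ 0, I(0) ≥ 0, V(0) ≥ 0 and Z(0) ≥ 0, then Q(t) ≥ 0, T(t) ≥ 0, I(t) ≥ 0, V(t) ≥ 0 and Z(t) ≥ 0 for all t ≥ 0. -/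
open Set Filter Topology
set_option maxHeartbeats 1600000

private lemma hiv_barrier (u : ℝ → ℝ) (hu : Differentiable ℝ u)
    (s : ℝ) (hs : 0 < s) (hus : u s = 0) (hpos : ∀ t ∈ Set.Ico (0:ℝ) s, 0 < u t) :
    deriv u s ≤ 0 := by
  have hd : HasDerivAt u (deriv u s) s := (hu s).hasDerivAt
  have hslope : Tendsto (slope u s) (𝓝[<] s) (𝓝 (deriv u s)) :=
    (hasDerivAt_iff_tendsto_slope.mp hd).mono_left
      (nhdsWithin_mono s (fun t ht => ne_of_lt ht))
  refine le_of_tendsto hslope ?_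
  filter_upwards [Ioo_mem_nhdsLT_of_mem (Set.mem_Ioc.mpr ⟨hs, le_refl s⟩)] with t ht
  have h1 : 0 < u t := hpos t ⟨le_of_lt ht.1, ht.2⟩
  have h2 : t - s < 0 := sub_neg.mpr ht.2
  rw [slope_def_field, hus]
  apply div_nonpos_of_nonneg_of_nonpos <;> linarith

private lemma hiv_firstExit (F : ℝ → ℝ) (hF : Continuous F) (t₂ : ℝ)
    (hF0 : 0 < F 0) (t' : ℝ) (ht' : t' ∈ Set.Icc 0 t₂) (hFt' : F t' ≤ 0) :
    ∃ s, 0 < s ∧ s ≤ t₂ ∧ F s = 0 ∧ ∀ t ∈ Set.Ico (0:ℝ) s, 0 < F t := by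
  set S : Set ℝ := {t | t ∈ Set.Icc (0:ℝ) t₂ ∧ F t ≤ 0} with hS
  have hSclosed : IsClosed S := (isClosed_Icc).inter (isClosed_Iic.preimage hF)
  have hSne : S.Nonempty := ⟨t', ht', hFt'⟩
  have hSbdd : BddBelow S := ⟨0, fun x hx => hx.1.1⟩
  set s := sInf S with hs
  have hsS : s ∈ S := hSclosed.csInf_mem hSne hSbdd
  have hs0 : 0 ≤ s := hsS.1.1
  have hst₂ : s ≤ t₂ := hsS.1.2
  have hbefore : ∀ t ∈ Set.Ico (0:ℝ) s, 0 < F t := by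
    intro t ht
    by_contra hcon
    push_neg at hcon
    have : s ≤ t := csInf_le hSbdd ⟨⟨ht.1, le_trans ht.2.le hst₂⟩, hcon⟩
    exact absurd ht.2 (not_lt.mpr this)
  have hspos : 0 < s := by
    rcases hs0.lt_or_eq with h | h
    · exact h
    · exact absurd hsS.2 (not_le.mpr (h ▸ hF0))
  have hFs : F s = 0 := by
    refine le_antisymm hsS.2 ?_
    have htend : Tendsto F (𝓝[<] s) (𝓝 (F s)) :=
      (hF.continuousAt).tendsto.mono_left nhdsWithin_le_nhds
    refine ge_of_tendsto htend ?_
    filter_upwards [Ioo_mem_nhdsLT_of_mem (Set.mem_Ioc.mpr ⟨hspos, le_refl s⟩)] with t ht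
    exact (hbefore t ⟨ht.1.le, ht.2⟩).le
  exact ⟨s, hspos, hst₂, hFs, hbefore⟩

private lemma hiv_min_eq_zero {a b : ℝ} (h : min a b = 0) : a = 0 ∨ b = 0 := by
  rcases min_choice a b with h' | h'
  · left; rw [← h', h]
  · right; rw [← h', h]

private lemma hiv_diff_shift (x : ℝ → ℝ) (hx : Differentiable ℝ x) (δ L : ℝ) :
    Differentiable ℝ (fun τ => x τ + δ * Real.exp (L * τ)) :=
  hx.add (((differentiable_id.const_mul L).exp).const_mul δ)

private lemma hiv_deriv_shift (x : ℝ → ℝ) (hx : Differentiable ℝ x) (δ L s : ℝ) :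
    deriv (fun τ => x τ + δ * Real.exp (L * τ)) s = deriv x s + δ * (Real.exp (L * s) * L) := by
  have h0 : HasDerivAt (fun τ : ℝ => L * τ) L s := by simpa using (hasDerivAt_id s).const_mul L
  exact ((hx s).hasDerivAt.add ((h0.exp).const_mul δ)).deriv

/-- Positivity of solutions of the within-host HIV model: if a differentiable
solution starts with nonnegative initial data, it stays nonnegative for all `t ≥ 0`. -/
theorem hiv_model_nonneg
    (Λ ϱ σ β p ξ b c κ μ₁ μ₂ μ₃ μ₄ μ₅ : ℝ)
    (hΛ : 0 < Λ) (hϱ : 0 < ϱ) (hσ : 0 < σ) (hβ : 0 < β) (hp : 0 < p)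
    (hξ : 0 < ξ) (hb : 0 < b) (hc : 0 < c) (hκ : 0 < κ)
    (hμ₁ : 0 < μ₁) (hμ₂ : 0 < μ₂) (hμ₃ : 0 < μ₃) (hμ₄ : 0 < μ₄) (hμ₅ : 0 < μ₅)
    (Q T I V Z : ℝ → ℝ)
    (hQ : Differentiable ℝ Q) (hT : Differentiable ℝ T) (hI : Differentiable ℝ I)
    (hV : Differentiable ℝ V) (hZ : Differentiable ℝ Z)
    (hQ' : ∀ t, 0 ≤ t → deriv Q t = Λ + ϱ * T t - σ * Q t - μ₁ * Q t)
    (hT' : ∀ t, 0 ≤ t → deriv T t = σ * Q t - β * T t * V t - ϱ * T t - μ₂ * T t)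
    (hI' : ∀ t, 0 ≤ t → deriv I t = β * T t * V t - μ₃ * I t - p * I t * Z t)
    (hV' : ∀ t, 0 ≤ t → deriv V t = ξ * I t - μ₄ * V t)
    (hZ' : ∀ t, 0 ≤ t → deriv Z t = b + c * I t * Z t / (κ + I t) - μ₅ * Z t)
    (hQ0 : 0 ≤ Q 0) (hT0 : 0 ≤ T 0) (hI0 : 0 ≤ I 0) (hV0 : 0 ≤ V 0) (hZ0 : 0 ≤ Z 0) :
    ∀ t, 0 ≤ t → 0 ≤ Q t ∧ 0 ≤ T t ∧ 0 ≤ I t ∧ 0 ≤ V t ∧ 0 ≤ Z t := by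
  intro t ht
  -- a uniform bound on [0, t]
  obtain ⟨C, hC⟩ : ∃ C, ∀ τ ∈ Set.Icc (0:ℝ) t,
      |Q τ| + |T τ| + |I τ| + |V τ| + |Z τ| ≤ C := by
    have hcont : Continuous (fun τ => |Q τ| + |T τ| + |I τ| + |V τ| + |Z τ|) :=
      ((((hQ.continuous.abs.add hT.continuous.abs).add hI.continuous.abs).add
        hV.continuous.abs).add hZ.continuous.abs)
    obtain ⟨x, hx, hmax⟩ := isCompact_Icc.exists_isMaxOn (Set.nonempty_Icc.mpr ht)
      hcont.continuousOn
    exact ⟨_, fun τ hτ => hmax hτ⟩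
  have hC0 : 0 ≤ C := by
    have := hC 0 ⟨le_refl 0, ht⟩
    have h1 := abs_nonneg (Q 0); have h2 := abs_nonneg (T 0); have h3 := abs_nonneg (I 0)
    have h4 := abs_nonneg (V 0); have h5 := abs_nonneg (Z 0)
    linarith
  set M : ℝ := C + κ/2 + 1 with hMdef
  have hMpos : 0 < M := by rw [hMdef]; linarith
  have hκM : κ/2 ≤ M := by rw [hMdef]; linarith
  set L : ℝ := ϱ + σ + 3*β*M + p*M + ξ + c with hLdef
  have hLpos : 0 < L := by
    rw [hLdef]
    have := mul_pos (mul_pos (by norm_num : (0:ℝ) < 3) hβ) hMpos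
    have := mul_pos hp hMpos
    linarith
  -- key perturbation claim
  have key : ∀ δ : ℝ, 0 < δ → δ * Real.exp (L * t) ≤ κ/2 →
      0 < Q t + δ * Real.exp (L * t) ∧ 0 < T t + δ * Real.exp (L * t) ∧
      0 < I t + δ * Real.exp (L * t) ∧ 0 < V t + δ * Real.exp (L * t) ∧
      0 < Z t + δ * Real.exp (L * t) := by
    intro δ hδ hδκ
    set E : ℝ → ℝ := fun τ => δ * Real.exp (L * τ) with hE
    set F : ℝ → ℝ := fun τ =>
      min (min (min (min (Q τ + E τ) (T τ + E τ)) (I τ + E τ)) (V τ + E τ)) (Z τ + E τ) with hF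
    suffices hsuff : ∀ τ ∈ Set.Icc (0:ℝ) t, 0 < F τ by
      have h := hsuff t ⟨ht, le_refl t⟩
      simp only [hF, hE, lt_min_iff] at h
      exact ⟨h.1.1.1.1, h.1.1.1.2, h.1.1.2, h.1.2, h.2⟩
    by_contra hcon
    push_neg at hcon
    obtain ⟨t', ht', hFt'⟩ := hcon
    have hEc : Continuous E := by
      rw [hE]; exact continuous_const.mul (Real.continuous_exp.comp (continuous_const.mul continuous_id))
    have hFc : Continuous F := by
      rw [hF]
      exact ((((hQ.continuous.add hEc).min (hT.continuous.add hEc)).min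
        (hI.continuous.add hEc)).min (hV.continuous.add hEc)).min (hZ.continuous.add hEc)
    have hF0 : 0 < F 0 := by
      have hE0 : E 0 = δ := by rw [hE]; simp
      simp only [hF, lt_min_iff, hE0]
      refine ⟨⟨⟨⟨?_, ?_⟩, ?_⟩, ?_⟩, ?_⟩ <;> linarith
    obtain ⟨s, hspos, hst, hFs, hbefore⟩ := hiv_firstExit F hFc t hF0 t' ht' hFt'
    -- facts at time s
    have hsmem : s ∈ Set.Icc (0:ℝ) t := ⟨hspos.le, hst⟩
    have hCs := hC s hsmem
    have habs : |Q s| ≤ M ∧ |T s| ≤ M ∧ |I s| ≤ M ∧ |V s| ≤ M ∧ |Z s| ≤ M := by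
      have h1 := abs_nonneg (Q s); have h2 := abs_nonneg (T s); have h3 := abs_nonneg (I s)
      have h4 := abs_nonneg (V s); have h5 := abs_nonneg (Z s)
      refine ⟨?_, ?_, ?_, ?_, ?_⟩ <;> (rw [hMdef]) <;> linarith
    obtain ⟨hQM, hTM, hIM, hVM, hZM⟩ := habs
    rw [abs_le] at hQM hTM hIM hVM hZM
    have hepos : 0 < E s := by rw [hE]; positivity
    have heκ : E s ≤ κ/2 := by
      rw [hE]
      calc δ * Real.exp (L * s) ≤ δ * Real.exp (L * t) := by
            apply mul_le_mul_of_nonneg_left (Real.exp_le_exp.mpr ?_) hδ.le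
            exact mul_le_mul_of_nonneg_left hst hLpos.le
        _ ≤ κ/2 := hδκ
    have heM : E s ≤ M := heκ.trans hκM
    -- each coordinate is ≥ -E s at time s

    -- lower bounds at s
    have hFle : ∀ r : ℝ, F s ≤ r → 0 ≤ r := fun r h => by rw [hFs] at h; exact h
    have hQe : 0 ≤ Q s + E s := hFle _ (by
      simp only [hF]
      exact (((min_le_left _ _).trans (min_le_left _ _)).trans (min_le_left _ _)).trans
        (min_le_left _ _))
    have hTe : 0 ≤ T s + E s := hFle _ (by
      simp only [hF]
      exact (((min_le_left _ _).trans (min_le_left _ _)).trans (min_le_left _ _)).trans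
        (min_le_right _ _))
    have hIe : 0 ≤ I s + E s := hFle _ (by
      simp only [hF]
      exact ((min_le_left _ _).trans (min_le_left _ _)).trans (min_le_right _ _))
    have hVe : 0 ≤ V s + E s := hFle _ (by
      simp only [hF]
      exact (min_le_left _ _).trans (min_le_right _ _))
    have hZe : 0 ≤ Z s + E s := hFle _ (by simp only [hF]; exact min_le_right _ _)
    have heL : δ * (Real.exp (L * s) * L) = E s * L := by simp only [hE]; ring
    have hone : Q s + E s = 0 ∨ T s + E s = 0 ∨ I s + E s = 0 ∨ V s + E s = 0 ∨
        Z s + E s = 0 := by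
      have h := hFs
      simp only [hF] at h
      rcases hiv_min_eq_zero h with h1 | h1
      · rcases hiv_min_eq_zero h1 with h2 | h2
        · rcases hiv_min_eq_zero h2 with h3 | h3
          · rcases hiv_min_eq_zero h3 with h4 | h4
            · exact Or.inl h4
            · exact Or.inr (Or.inl h4)
          · exact Or.inr (Or.inr (Or.inl h3))
        · exact Or.inr (Or.inr (Or.inr (Or.inl h2)))
      · exact Or.inr (Or.inr (Or.inr (Or.inr h1)))
    rcases hone with hz | hz | hz | hz | hz
    · -- Q touches the barrier
      have hbar := hiv_barrier (fun τ => Q τ + δ * Real.exp (L * τ)) (hiv_diff_shift Q hQ δ L)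
        s hspos (by simpa [hE] using hz)
        (fun τ hτ => by
          have h := hbefore τ hτ
          simp only [hF, hE, lt_min_iff] at h
          exact h.1.1.1.1)
      rw [hiv_deriv_shift Q hQ δ L s, hQ' s hspos.le, heL] at hbar
      have hzs : Q s = -(E s) := by linarith
      rw [hzs, hLdef] at hbar
      linarith only [hbar, hΛ, mul_nonneg hϱ.le hTe, mul_nonneg hepos.le hμ₁.le,
        mul_nonneg (mul_nonneg (mul_nonneg (by norm_num : (0:ℝ) ≤ 3) hβ.le) hMpos.le) hepos.le,
        mul_nonneg (mul_nonneg hp.le hMpos.le) hepos.le, mul_nonneg hepos.le hξ.le,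
        mul_nonneg hepos.le hc.le, mul_nonneg hepos.le hϱ.le, mul_nonneg hepos.le hσ.le]

    · -- T touches the barrier
      have hbar := hiv_barrier (fun τ => T τ + δ * Real.exp (L * τ)) (hiv_diff_shift T hT δ L)
        s hspos (by simpa [hE] using hz)
        (fun τ hτ => by
          have h := hbefore τ hτ
          simp only [hF, hE, lt_min_iff] at h
          exact h.1.1.1.2)
      rw [hiv_deriv_shift T hT δ L s, hT' s hspos.le, heL] at hbar
      have hzs : T s = -(E s) := by linarith
      rw [hzs, hLdef] at hbar
      linarith only [hbar, mul_nonneg hσ.le hQe, mul_pos hμ₂ hepos,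
        mul_nonneg hβ.le (mul_nonneg hepos.le (by linarith [hVM.1] : (0:ℝ) ≤ V s + M)),
        mul_nonneg (mul_nonneg hβ.le hMpos.le) hepos.le,
        mul_nonneg (mul_nonneg (mul_nonneg (by norm_num : (0:ℝ) ≤ 3) hβ.le) hMpos.le) hepos.le,
        mul_nonneg (mul_nonneg hp.le hMpos.le) hepos.le, mul_nonneg hepos.le hξ.le,
        mul_nonneg hepos.le hc.le, mul_nonneg hepos.le hϱ.le, mul_nonneg hepos.le hσ.le]

    · -- I touches the barrier
      have hbar := hiv_barrier (fun τ => I τ + δ * Real.exp (L * τ)) (hiv_diff_shift I hI δ L)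
        s hspos (by simpa [hE] using hz)
        (fun τ hτ => by
          have h := hbefore τ hτ
          simp only [hF, hE, lt_min_iff] at h
          exact h.1.1.2)
      rw [hiv_deriv_shift I hI δ L s, hI' s hspos.le, heL] at hbar
      have hzs : I s = -(E s) := by linarith
      rw [hzs, hLdef] at hbar
      linarith only [hbar, mul_nonneg hβ.le (mul_nonneg hTe hVe), mul_pos hμ₃ hepos,
        mul_nonneg hβ.le (mul_nonneg hepos.le (by linarith [hTM.2] : (0:ℝ) ≤ M - T s)),
        mul_nonneg hβ.le (mul_nonneg hepos.le (by linarith [hVM.2] : (0:ℝ) ≤ M - V s)),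
        mul_nonneg hβ.le (mul_nonneg hepos.le (by linarith [heM] : (0:ℝ) ≤ M - E s)),
        mul_nonneg hp.le (mul_nonneg hepos.le (by linarith [hZM.1] : (0:ℝ) ≤ Z s + M)),
        mul_nonneg (mul_nonneg (mul_nonneg (by norm_num : (0:ℝ) ≤ 3) hβ.le) hMpos.le) hepos.le,
        mul_nonneg (mul_nonneg hp.le hMpos.le) hepos.le, mul_nonneg hepos.le hξ.le,
        mul_nonneg hepos.le hc.le, mul_nonneg hepos.le hϱ.le, mul_nonneg hepos.le hσ.le]

    · -- V touches the barrier
      have hbar := hiv_barrier (fun τ => V τ + δ * Real.exp (L * τ)) (hiv_diff_shift V hV δ L)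
        s hspos (by simpa [hE] using hz)
        (fun τ hτ => by
          have h := hbefore τ hτ
          simp only [hF, hE, lt_min_iff] at h
          exact h.1.2)
      rw [hiv_deriv_shift V hV δ L s, hV' s hspos.le, heL] at hbar
      have hzs : V s = -(E s) := by linarith
      rw [hzs, hLdef] at hbar
      linarith only [hbar, mul_nonneg hξ.le hIe, mul_pos hμ₄ hepos,
        mul_nonneg (mul_nonneg (mul_nonneg (by norm_num : (0:ℝ) ≤ 3) hβ.le) hMpos.le) hepos.le,
        mul_nonneg (mul_nonneg hp.le hMpos.le) hepos.le, mul_nonneg hepos.le hξ.le,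
        mul_nonneg hepos.le hc.le, mul_nonneg hepos.le hϱ.le, mul_nonneg hepos.le hσ.le]

    · -- Z touches the barrier
      have hbar := hiv_barrier (fun τ => Z τ + δ * Real.exp (L * τ)) (hiv_diff_shift Z hZ δ L)
        s hspos (by simpa [hE] using hz)
        (fun τ hτ => by
          have h := hbefore τ hτ
          simp only [hF, hE, lt_min_iff] at h
          exact h.2)
      rw [hiv_deriv_shift Z hZ δ L s, hZ' s hspos.le, heL] at hbar
      have hzs : Z s = -(E s) := by linarith
      rw [hzs, hLdef] at hbar
      have hden : 0 < κ + I s := by linarith [hIe, heκ, hepos]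
      have hfr : -(c * E s) ≤ c * I s * -(E s) / (κ + I s) := by
        rw [le_div_iff₀ hden]
        linarith only [mul_nonneg (mul_nonneg hc.le hepos.le) hκ.le]
      clear_value M L E F
      linarith only [hbar, hfr, hb, mul_pos hμ₅ hepos,
        mul_nonneg (mul_nonneg (mul_nonneg (by norm_num : (0:ℝ) ≤ 3) hβ.le) hMpos.le) hepos.le,
        mul_nonneg (mul_nonneg hp.le hMpos.le) hepos.le, mul_nonneg hepos.le hξ.le,
        mul_nonneg hepos.le hc.le, mul_nonneg hepos.le hϱ.le, mul_nonneg hepos.le hσ.le]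

  -- conclude from key
  have wrap : ∀ y : ℝ,
      (∀ δ : ℝ, 0 < δ → δ * Real.exp (L * t) ≤ κ/2 → 0 < y + δ * Real.exp (L * t)) → 0 ≤ y := by
    intro y hy
    by_contra hneg
    push_neg at hneg
    have hm : 0 < min (κ/2) (-y/2) := lt_min (by linarith) (by linarith)
    set δ := min (κ/2) (-y/2) * Real.exp (-(L*t)) with hδdef
    have hδpos : 0 < δ := mul_pos hm (Real.exp_pos _)
    have hprod : δ * Real.exp (L*t) = min (κ/2) (-y/2) := by
      rw [hδdef, mul_assoc, ← Real.exp_add, neg_add_cancel, Real.exp_zero, mul_one]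
    have h1 := hy δ hδpos (by rw [hprod]; exact min_le_left _ _)
    rw [hprod] at h1
    have h2 : min (κ/2) (-y/2) ≤ -y/2 := min_le_right _ _
    linarith
  exact ⟨wrap _ (fun δ h1 h2 => (key δ h1 h2).1), wrap _ (fun δ h1 h2 => (key δ h1 h2).2.1),
    wrap _ (fun δ h1 h2 => (key δ h1 h2).2.2.1), wrap _ (fun δ h1 h2 => (key δ h1 h2).2.2.2.1),
    wrap _ (fun δ h1 h2 => (key δ h1 h2).2.2.2.2)⟩
end

section
/- Let Q, T, I, V, Z : ℝ → ℝ be differentiable nonnegative functions satisfying the within-host HIV model for all t ≥ 0, and assume μ₅ > c. Define W(t) = Q(t) + T(t) + I(t) + (μ₃/(2ξ))·V(t) + Z(t) and m = min{μ₁, μ₂, μ₃/2, μ₄, μ₅ − c}. Then for all t ≥ 0, W(t) ≤ e^{−m t}·(W(0) − (Λ + b)/m) + (Λ + b)/m. -/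
/-- Boundedness of solutions of the within-host HIV model: assuming `μ₅ > c`, the
weighted total population `W = Q + T + I + (μ₃/(2ξ))·V + Z` satisfies
`W t ≤ e^{-m t}(W 0 - (Λ + b)/m) + (Λ + b)/m` with
`m = min{μ₁, μ₂, μ₃/2, μ₄, μ₅ - c}`. -/
theorem hiv_model_bounded
    (Λ ϱ σ β p ξ b c κ μ₁ μ₂ μ₃ μ₄ μ₅ : ℝ)
    (hΛ : 0 < Λ) (hϱ : 0 < ϱ) (hσ : 0 < σ) (hβ : 0 < β) (hp : 0 < p)
    (hξ : 0 < ξ) (hb : 0 < b) (hc : 0 < c) (hκ : 0 < κ)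
    (hμ₁ : 0 < μ₁) (hμ₂ : 0 < μ₂) (hμ₃ : 0 < μ₃) (hμ₄ : 0 < μ₄) (hμ₅ : 0 < μ₅)
    (hμ₅c : μ₅ > c)
    (Q T I V Z : ℝ → ℝ)
    (hQ : Differentiable ℝ Q) (hT : Differentiable ℝ T) (hI : Differentiable ℝ I)
    (hV : Differentiable ℝ V) (hZ : Differentiable ℝ Z)
    (hQpos : ∀ t, 0 ≤ t → 0 ≤ Q t) (hTpos : ∀ t, 0 ≤ t → 0 ≤ T t)
    (hIpos : ∀ t, 0 ≤ t → 0 ≤ I t) (hVpos : ∀ t, 0 ≤ t → 0 ≤ V t)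
    (hZpos : ∀ t, 0 ≤ t → 0 ≤ Z t)
    (hQ' : ∀ t, 0 ≤ t → deriv Q t = Λ + ϱ * T t - σ * Q t - μ₁ * Q t)
    (hT' : ∀ t, 0 ≤ t → deriv T t = σ * Q t - β * T t * V t - ϱ * T t - μ₂ * T t)
    (hI' : ∀ t, 0 ≤ t → deriv I t = β * T t * V t - μ₃ * I t - p * I t * Z t)
    (hV' : ∀ t, 0 ≤ t → deriv V t = ξ * I t - μ₄ * V t)
    (hZ' : ∀ t, 0 ≤ t → deriv Z t = b + c * I t * Z t / (κ + I t) - μ₅ * Z t)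
    (W : ℝ → ℝ)
    (hW : ∀ t, W t = Q t + T t + I t + (μ₃ / (2 * ξ)) * V t + Z t)
    (m : ℝ)
    (hm : m = min μ₁ (min μ₂ (min (μ₃ / 2) (min μ₄ (μ₅ - c))))) :
    ∀ t, 0 ≤ t →
      W t ≤ Real.exp (-m * t) * (W 0 - (Λ + b) / m) + (Λ + b) / m := by
  have hξ2 : (0:ℝ) < 2 * ξ := by linarith
  have hcoef : 0 < μ₃ / (2 * ξ) := div_pos hμ₃ hξ2
  have hm1 : m ≤ μ₁ := by rw [hm]; exact min_le_left _ _
  have hm2 : m ≤ μ₂ := by rw [hm]; exact le_trans (min_le_right _ _) (min_le_left _ _)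
  have hm3 : m ≤ μ₃ / 2 := by
    rw [hm]; exact le_trans (min_le_right _ _) (le_trans (min_le_right _ _) (min_le_left _ _))
  have hm4 : m ≤ μ₄ := by
    rw [hm]
    exact le_trans (min_le_right _ _) (le_trans (min_le_right _ _)
      (le_trans (min_le_right _ _) (min_le_left _ _)))
  have hm5 : m ≤ μ₅ - c := by
    rw [hm]
    exact le_trans (min_le_right _ _) (le_trans (min_le_right _ _)
      (le_trans (min_le_right _ _) (min_le_right _ _)))
  have hmpos : 0 < m := by
    rw [hm]
    simp only [lt_min_iff]
    refine ⟨hμ₁, hμ₂, by linarith, hμ₄, by linarith⟩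
  have hWfun : W = fun t => Q t + T t + I t + (μ₃ / (2 * ξ)) * V t + Z t := funext hW
  have hWdiff : Differentiable ℝ W := by
    rw [hWfun]
    exact (((hQ.add hT).add hI).add (hV.const_mul _)).add hZ
  have hWderiv : ∀ t, deriv W t
      = deriv Q t + deriv T t + deriv I t + (μ₃ / (2 * ξ)) * deriv V t + deriv Z t := by
    intro t
    have h : HasDerivAt W
        (deriv Q t + deriv T t + deriv I t + (μ₃ / (2 * ξ)) * deriv V t + deriv Z t) t := by
      rw [hWfun]
      exact (((((hQ t).hasDerivAt.add (hT t).hasDerivAt).add (hI t).hasDerivAt).add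
        (((hV t).hasDerivAt).const_mul _)).add (hZ t).hasDerivAt)
    exact h.deriv
  -- key differential inequality
  have key : ∀ t, 0 ≤ t → deriv W t ≤ Λ + b - m * W t := by
    intro t ht
    have hκI : 0 < κ + I t := by have := hIpos t ht; linarith
    have hfrac : c * I t * Z t / (κ + I t) ≤ c * Z t := by
      rw [div_le_iff₀ hκI]
      have h1 := hIpos t ht
      have h2 := hZpos t ht
      nlinarith [mul_nonneg (mul_nonneg hc.le h2) hκ.le]
    have hQn := hQpos t ht; have hTn := hTpos t ht; have hIn := hIpos t ht
    have hVn := hVpos t ht; have hZn := hZpos t ht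
    have hpIZ : 0 ≤ p * I t * Z t := by positivity
    rw [hWderiv, hQ' t ht, hT' t ht, hI' t ht, hV' t ht, hZ' t ht, hW t]
    have hVterm : m * ((μ₃ / (2 * ξ)) * V t) ≤ μ₄ * ((μ₃ / (2 * ξ)) * V t) := by
      have : 0 ≤ (μ₃ / (2 * ξ)) * V t := by positivity
      nlinarith
    have hxi : μ₃ / (2 * ξ) * ξ = μ₃ / 2 := by
      field_simp
    nlinarith [mul_le_mul_of_nonneg_right hm1 hQn, mul_le_mul_of_nonneg_right hm2 hTn,
      mul_le_mul_of_nonneg_right hm3 hIn, mul_le_mul_of_nonneg_right hm5 hZn]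
  set C := (Λ + b) / m with hC
  have hmC : m * C = Λ + b := by
    rw [hC]; field_simp
  set g : ℝ → ℝ := fun t => Real.exp (m * t) * (W t - C) with hg
  have hgderiv : ∀ t, HasDerivAt g
      (m * Real.exp (m * t) * (W t - C) + Real.exp (m * t) * deriv W t) t := by
    intro t
    have h1 : HasDerivAt (fun t => Real.exp (m * t)) (Real.exp (m * t) * m) t := by
      simpa using ((hasDerivAt_id t).const_mul m).exp
    have h2 : HasDerivAt (fun t => W t - C) (deriv W t) t :=
      ((hWdiff t).hasDerivAt).sub_const C
    have := h1.mul h2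
    exact this.congr_deriv (by ring)
  have hanti : AntitoneOn g (Set.Ici (0:ℝ)) := by
    apply antitoneOn_of_deriv_nonpos (convex_Ici 0)
    · exact (Continuous.mul (Real.continuous_exp.comp (continuous_const.mul continuous_id)) ((hWdiff.continuous).sub continuous_const)).continuousOn
    · intro x hx
      exact ((hgderiv x).differentiableAt).differentiableWithinAt
    · intro x hx
      rw [interior_Ici] at hx
      have hx0 : (0:ℝ) ≤ x := le_of_lt hx
      rw [(hgderiv x).deriv]
      have hkey := key x hx0
      have hexp : 0 < Real.exp (m * x) := Real.exp_pos _
      have : m * Real.exp (m * x) * (W x - C) + Real.exp (m * x) * deriv W x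
          = Real.exp (m * x) * (deriv W x + m * W x - (Λ + b)) := by
        rw [← hmC]; ring
      rw [this]
      have : deriv W x + m * W x - (Λ + b) ≤ 0 := by linarith
      exact mul_nonpos_of_nonneg_of_nonpos hexp.le this
  intro t ht
  have hle : g t ≤ g 0 := hanti (Set.self_mem_Ici) ht ht
  have hg0 : g 0 = W 0 - C := by simp [hg]
  have hexp : 0 < Real.exp (m * t) := Real.exp_pos _
  have h1 : Real.exp (m * t) * (W t - C) ≤ W 0 - C := by
    rw [← hg0]; exact hle
  have h2 : W t - C ≤ (W 0 - C) / Real.exp (m * t) := by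
    rw [le_div_iff₀ hexp]
    linarith [h1, mul_comm (Real.exp (m * t)) (W t - C)]
  have h3 : (W 0 - C) / Real.exp (m * t) = Real.exp (-m * t) * (W 0 - C) := by
    rw [neg_mul, Real.exp_neg, div_eq_inv_mul]
  linarith [h2, h3.le, h3.ge]
end

section
/- For positive reals Λ, β, σ, ξ, b, p, ϱ, μ₁, μ₂, μ₃, μ₄, μ₅, setting R₀ = βΛμ₅σξ / (μ₄(bp + μ₃μ₅)(μ₁(μ₂+ϱ) + μ₂σ)), the identity (bp + μ₅(μ₃ + μ₄))² − (4βΛμ₅²σξ + (μ₁(μ₂+ϱ)+μ₂σ)(bp + μ₅(μ₃ − μ₄))²)/(μ₁(μ₂+ϱ)+μ₂σ) = 4μ₄μ₅(1 − R₀)(bp + μ₃μ₅) holds. In particular this quantity is positive if and only if R₀ < 1. -/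
/-- Algebraic identity used in the local stability analysis:
`(bp + μ₅(μ₃+μ₄))² − (4βΛμ₅²σξ + D(bp + μ₅(μ₃−μ₄))²)/D = 4μ₄μ₅(1 − R₀)(bp + μ₃μ₅)`
where `D = μ₁(μ₂+ϱ)+μ₂σ`; in particular this quantity is positive iff `R₀ < 1`. -/
theorem hiv_eigenvalue_identity_two
    (Λ β σ ξ b p ϱ μ₁ μ₂ μ₃ μ₄ μ₅ : ℝ)
    (hΛ : 0 < Λ) (hβ : 0 < β) (hσ : 0 < σ) (hξ : 0 < ξ) (hb : 0 < b) (hp : 0 < p)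
    (hϱ : 0 < ϱ) (hμ₁ : 0 < μ₁) (hμ₂ : 0 < μ₂) (hμ₃ : 0 < μ₃) (hμ₄ : 0 < μ₄)
    (hμ₅ : 0 < μ₅)
    (R₀ : ℝ)
    (hR₀ : R₀ = β * Λ * μ₅ * σ * ξ /
      (μ₄ * (b * p + μ₃ * μ₅) * (μ₁ * (μ₂ + ϱ) + μ₂ * σ))) :
    (b * p + μ₅ * (μ₃ + μ₄)) ^ 2 -
        (4 * β * Λ * μ₅ ^ 2 * σ * ξ +
            (μ₁ * (μ₂ + ϱ) + μ₂ * σ) * (b * p + μ₅ * (μ₃ - μ₄)) ^ 2) /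
          (μ₁ * (μ₂ + ϱ) + μ₂ * σ) =
      4 * μ₄ * μ₅ * (1 - R₀) * (b * p + μ₃ * μ₅) ∧
    (0 < (b * p + μ₅ * (μ₃ + μ₄)) ^ 2 -
        (4 * β * Λ * μ₅ ^ 2 * σ * ξ +
            (μ₁ * (μ₂ + ϱ) + μ₂ * σ) * (b * p + μ₅ * (μ₃ - μ₄)) ^ 2) /
          (μ₁ * (μ₂ + ϱ) + μ₂ * σ) ↔ R₀ < 1) := by
  have hD : 0 < μ₁ * (μ₂ + ϱ) + μ₂ * σ := by positivity
  have hden : 0 < μ₄ * (b * p + μ₃ * μ₅) * (μ₁ * (μ₂ + ϱ) + μ₂ * σ) := by positivity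
  have key : (b * p + μ₅ * (μ₃ + μ₄)) ^ 2 -
        (4 * β * Λ * μ₅ ^ 2 * σ * ξ +
            (μ₁ * (μ₂ + ϱ) + μ₂ * σ) * (b * p + μ₅ * (μ₃ - μ₄)) ^ 2) /
          (μ₁ * (μ₂ + ϱ) + μ₂ * σ) =
      4 * μ₄ * μ₅ * (1 - R₀) * (b * p + μ₃ * μ₅) := by
    subst hR₀
    field_simp
    ring
  refine ⟨key, ?_⟩
  rw [key]
  have hpos : 0 < 4 * μ₄ * μ₅ * (b * p + μ₃ * μ₅) := by positivity
  constructor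
  · intro h
    nlinarith
  · intro h
    nlinarith
end

section
/- Let J be the 5×5 real matrix with rows (−μ₁−σ, ϱ, 0, 0, 0), (σ, −μ₂−ϱ, 0, −βΛσ/(μ₁(μ₂+ϱ)+μ₂σ), 0), (0, 0, −bp/μ₅−μ₃, βΛσ/(μ₁(μ₂+ϱ)+μ₂σ), 0), (0, 0, ξ, −μ₄, 0), (0, 0, bc/(κμ₅), 0, −μ₅). Then the characteristic polynomial of J factors as (λ − λ₁)(λ − λ₂)(λ − λ₃)(λ − λ₄)(λ − λ₅), where λ₁ = −μ₅, λ₂,₃ = ½(∓√(2σ(μ₁−μ₂+ϱ)+(−μ₁+μ₂+ϱ)²+σ²) − μ₁ − μ₂ − σ − ϱ), and λ₄,₅ = −(±√(4βΛμ₅²σξ + (μ₁(μ₂+ϱ)+μ₂σ)(bp+μ₅(μ₃−μ₄))²)/√(μ₁(μ₂+ϱ)+μ₂σ) + bp + μ₅(μ₃+μ₄))/(2μ₅). -/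
set_option maxHeartbeats 1600000


open Polynomial

/-- The characteristic polynomial of the Jacobian of the within-host HIV model at the
infection-free equilibrium factors into linear factors with the five explicit
eigenvalues `λ₁, …, λ₅`. -/
theorem hiv_jacobian_charpoly_factorization
    (Λ β σ ξ b p c κ ϱ μ₁ μ₂ μ₃ μ₄ μ₅ : ℝ)
    (hΛ : 0 < Λ) (hβ : 0 < β) (hσ : 0 < σ) (hξ : 0 < ξ) (hb : 0 < b) (hp : 0 < p)
    (hc : 0 < c) (hκ : 0 < κ) (hϱ : 0 < ϱ) (hμ₁ : 0 < μ₁) (hμ₂ : 0 < μ₂)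
    (hμ₃ : 0 < μ₃) (hμ₄ : 0 < μ₄) (hμ₅ : 0 < μ₅)
    (J : Matrix (Fin 5) (Fin 5) ℝ)
    (hJ : J = !![-μ₁ - σ, ϱ, 0, 0, 0;
                 σ, -μ₂ - ϱ, 0, -(β * Λ * σ / (μ₁ * (μ₂ + ϱ) + μ₂ * σ)), 0;
                 0, 0, -(b * p / μ₅) - μ₃, β * Λ * σ / (μ₁ * (μ₂ + ϱ) + μ₂ * σ), 0;
                 0, 0, ξ, -μ₄, 0;
                 0, 0, b * c / (κ * μ₅), 0, -μ₅])
    (lam₁ lam₂ lam₃ lam₄ lam₅ : ℝ)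
    (h₁ : lam₁ = -μ₅)
    (h₂ : lam₂ = (1 / 2) *
      (-Real.sqrt (2 * σ * (μ₁ - μ₂ + ϱ) + (-μ₁ + μ₂ + ϱ) ^ 2 + σ ^ 2)
        - μ₁ - μ₂ - σ - ϱ))
    (h₃ : lam₃ = (1 / 2) *
      (Real.sqrt (2 * σ * (μ₁ - μ₂ + ϱ) + (-μ₁ + μ₂ + ϱ) ^ 2 + σ ^ 2)
        - μ₁ - μ₂ - σ - ϱ))
    (h₄ : lam₄ = -((Real.sqrt (4 * β * Λ * μ₅ ^ 2 * σ * ξ +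
          (μ₁ * (μ₂ + ϱ) + μ₂ * σ) * (b * p + μ₅ * (μ₃ - μ₄)) ^ 2) /
            Real.sqrt (μ₁ * (μ₂ + ϱ) + μ₂ * σ) +
          b * p + μ₅ * (μ₃ + μ₄)) / (2 * μ₅)))
    (h₅ : lam₅ = -((-(Real.sqrt (4 * β * Λ * μ₅ ^ 2 * σ * ξ +
          (μ₁ * (μ₂ + ϱ) + μ₂ * σ) * (b * p + μ₅ * (μ₃ - μ₄)) ^ 2) /
            Real.sqrt (μ₁ * (μ₂ + ϱ) + μ₂ * σ)) +
          b * p + μ₅ * (μ₃ + μ₄)) / (2 * μ₅))) :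
    J.charpoly = (X - C lam₁) * (X - C lam₂) * (X - C lam₃) * (X - C lam₄) * (X - C lam₅) := by
  have hd : (0:ℝ) < μ₁ * (μ₂ + ϱ) + μ₂ * σ := by positivity
  set d := μ₁ * (μ₂ + ϱ) + μ₂ * σ with hdef
  have hs2 : Real.sqrt (2 * σ * (μ₁ - μ₂ + ϱ) + (-μ₁ + μ₂ + ϱ) ^ 2 + σ ^ 2) ^ 2
      = 2 * σ * (μ₁ - μ₂ + ϱ) + (-μ₁ + μ₂ + ϱ) ^ 2 + σ ^ 2 :=
    Real.sq_sqrt (by nlinarith [sq_nonneg (μ₁ + σ - μ₂ - ϱ), mul_pos hσ hϱ])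
  set s := Real.sqrt (2 * σ * (μ₁ - μ₂ + ϱ) + (-μ₁ + μ₂ + ϱ) ^ 2 + σ ^ 2) with hsdef
  have hD0 : (0:ℝ) ≤ 4 * β * Λ * μ₅ ^ 2 * σ * ξ + d * (b * p + μ₅ * (μ₃ - μ₄)) ^ 2 := by
    positivity
  have hsD : Real.sqrt (4 * β * Λ * μ₅ ^ 2 * σ * ξ + d * (b * p + μ₅ * (μ₃ - μ₄)) ^ 2) ^ 2
      = 4 * β * Λ * μ₅ ^ 2 * σ * ξ + d * (b * p + μ₅ * (μ₃ - μ₄)) ^ 2 := Real.sq_sqrt hD0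
  set sD := Real.sqrt (4 * β * Λ * μ₅ ^ 2 * σ * ξ + d * (b * p + μ₅ * (μ₃ - μ₄)) ^ 2) with hsDdef
  have hsd : Real.sqrt d ^ 2 = d := Real.sq_sqrt hd.le
  have hsdpos : (0:ℝ) < Real.sqrt d := Real.sqrt_pos.2 hd
  set sd := Real.sqrt d with hsddef
  -- quadratic factor lemmas
  have q23 : ∀ y : ℝ, (y - lam₂) * (y - lam₃) = (y + μ₁ + σ) * (y + μ₂ + ϱ) - σ * ϱ := by
    intro y
    rw [h₂, h₃]
    linear_combination (-(1:ℝ)/4) * hs2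
  have q45 : ∀ y : ℝ, (y - lam₄) * (y - lam₅)
      = (y + b * p / μ₅ + μ₃) * (y + μ₄) - ξ * (β * Λ * σ / d) := by
    intro y
    rw [h₄, h₅]
    field_simp [hμ₅.ne', hd.ne', hsdpos.ne']
    linear_combination (d*(b*p+μ₅*(μ₃-μ₄))^2 + 4*μ₅^2*β*Λ*σ*ξ) * hsd - d*hsD
  apply Polynomial.funext
  intro x
  have e1 : Polynomial.eval x J.charpoly = (J.charmatrix.map (Polynomial.evalRingHom x)).det := by
    rw [Matrix.charpoly, ← coe_evalRingHom, RingHom.map_det, RingHom.mapMatrix_apply]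
  have e2 : J.charmatrix.map (Polynomial.evalRingHom x) =
      !![x + μ₁ + σ, -ϱ, 0, 0, 0;
         -σ, x + μ₂ + ϱ, 0, β * Λ * σ / d, 0;
         0, 0, x + b * p / μ₅ + μ₃, -(β * Λ * σ / d), 0;
         0, 0, -ξ, x + μ₄, 0;
         0, 0, -(b * c / (κ * μ₅)), 0, x + μ₅] := by
    subst hJ
    ext i j
    fin_cases i <;> fin_cases j <;>
      simp [Matrix.charmatrix_apply, Matrix.diagonal_apply, Matrix.vecHead, Matrix.vecTail] <;> ring
  rw [e1, e2]
  have e3 : Polynomial.eval x ((X - C lam₁) * (X - C lam₂) * (X - C lam₃) * (X - C lam₄) * (X - C lam₅))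
      = (x - lam₁) * ((x - lam₂) * (x - lam₃)) * ((x - lam₄) * (x - lam₅)) := by
    simp; ring
  rw [e3, q23, q45, h₁]
  simp [Matrix.det_succ_row_zero, Fin.sum_univ_succ, Fin.succAbove]
  field_simp
  ring
end

section
/- Let J be the 5×5 real matrix with rows (−μ₁−σ, ϱ, 0, 0, 0), (σ, −μ₂−ϱ, 0, −βΛσ/(μ₁(μ₂+ϱ)+μ₂σ), 0), (0, 0, −bp/μ₅−μ₃, βΛσ/(μ₁(μ₂+ϱ)+μ₂σ), 0), (0, 0, ξ, −μ₄, 0), (0, 0, bc/(κμ₅), 0, −μ₅). If R₀ < 1, then every complex eigenvalue of J has negative real part; i.e., the infection-free equilibrium is locally asymptotically stable. -/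
lemma quad_root_re_neg (B C : ℝ) (hB : 0 < B) (hC : 0 < C) (z : ℂ)
    (h : z^2 + (B:ℂ)*z + (C:ℂ) = 0) : z.re < 0 := by
  have hre : z.re^2 - z.im^2 + B*z.re + C = 0 := by
    have := congrArg Complex.re h
    simp [pow_two, Complex.mul_re, Complex.mul_im] at this
    linarith
  have him : z.im * (2*z.re + B) = 0 := by
    have := congrArg Complex.im h
    simp [pow_two, Complex.mul_re, Complex.mul_im] at this
    linarith
  rcases mul_eq_zero.mp him with h0 | h0
  · by_contra hx
    push_neg at hx
    rw [h0] at hre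
    nlinarith
  · linarith

set_option maxHeartbeats 1000000 in
/-- Local asymptotic stability of the infection-free equilibrium: if `R₀ < 1`, then
every complex eigenvalue (root of the characteristic polynomial over `ℂ`) of the
Jacobian at the infection-free equilibrium has negative real part. -/
theorem hiv_infection_free_locally_stable
    (Λ β σ ξ b p c κ ϱ μ₁ μ₂ μ₃ μ₄ μ₅ : ℝ)
    (hΛ : 0 < Λ) (hβ : 0 < β) (hσ : 0 < σ) (hξ : 0 < ξ) (hb : 0 < b) (hp : 0 < p)
    (hc : 0 < c) (hκ : 0 < κ) (hϱ : 0 < ϱ) (hμ₁ : 0 < μ₁) (hμ₂ : 0 < μ₂)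
    (hμ₃ : 0 < μ₃) (hμ₄ : 0 < μ₄) (hμ₅ : 0 < μ₅)
    (R₀ : ℝ)
    (hR₀ : R₀ = β * Λ * μ₅ * σ * ξ /
      (μ₄ * (b * p + μ₃ * μ₅) * (μ₁ * (μ₂ + ϱ) + μ₂ * σ)))
    (hR₀lt : R₀ < 1)
    (J : Matrix (Fin 5) (Fin 5) ℝ)
    (hJ : J = !![-μ₁ - σ, ϱ, 0, 0, 0;
                 σ, -μ₂ - ϱ, 0, -(β * Λ * σ / (μ₁ * (μ₂ + ϱ) + μ₂ * σ)), 0;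
                 0, 0, -(b * p / μ₅) - μ₃, β * Λ * σ / (μ₁ * (μ₂ + ϱ) + μ₂ * σ), 0;
                 0, 0, ξ, -μ₄, 0;
                 0, 0, b * c / (κ * μ₅), 0, -μ₅]) :
    ∀ z : ℂ, (J.map (Complex.ofReal)).charpoly.IsRoot z → z.re < 0 := by
  intro z hz
  rw [Polynomial.IsRoot, Matrix.charpoly, eval_det,
    matPolyEquiv_eval_eq_map] at hz
  have hA : ((Matrix.charmatrix (J.map Complex.ofReal)).map (Polynomial.eval z)) =
    !![z + μ₁ + σ, -ϱ, 0, 0, 0;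
       -σ, z + μ₂ + ϱ, 0, (β * Λ * σ / (μ₁ * (μ₂ + ϱ) + μ₂ * σ) : ℝ), 0;
       0, 0, z + (b * p / μ₅ : ℝ) + μ₃, -(β * Λ * σ / (μ₁ * (μ₂ + ϱ) + μ₂ * σ) : ℝ), 0;
       0, 0, -ξ, z + μ₄, 0;
       0, 0, -(b * c / (κ * μ₅) : ℝ), 0, z + μ₅] := by
    subst hJ
    ext i j
    fin_cases i <;> fin_cases j <;>
      simp [Matrix.charmatrix_apply, Matrix.one_apply, Matrix.vecHead, Matrix.vecTail] <;> ring
  rw [hA] at hz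
  have key : (z + μ₅) * ((z^2 + (μ₁ + σ + μ₂ + ϱ) * z + (μ₁ * (μ₂ + ϱ) + μ₂ * σ)) *
      (z^2 + ((b * p / μ₅ : ℝ) + μ₃ + μ₄) * z +
        (((b * p / μ₅ : ℝ) + μ₃) * μ₄ - ξ * (β * Λ * σ / (μ₁ * (μ₂ + ϱ) + μ₂ * σ) : ℝ)))) = 0 := by
    simp [Matrix.det_succ_row_zero, Fin.sum_univ_succ, Fin.succAbove] at hz
    push_cast at hz ⊢
    linear_combination hz
  have hD : 0 < μ₁ * (μ₂ + ϱ) + μ₂ * σ := by positivity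
  rcases mul_eq_zero.mp key with h1 | h2
  · have : z = -(μ₅ : ℂ) := by linear_combination h1
    rw [this]
    simpa using hμ₅
  rcases mul_eq_zero.mp h2 with h3 | h4
  · exact quad_root_re_neg (μ₁ + σ + μ₂ + ϱ) (μ₁ * (μ₂ + ϱ) + μ₂ * σ)
      (by positivity) hD z (by push_cast; linear_combination h3)
  · push_cast at h4
    refine quad_root_re_neg (b * p / μ₅ + μ₃ + μ₄)
      ((b * p / μ₅ + μ₃) * μ₄ - ξ * (β * Λ * σ / (μ₁ * (μ₂ + ϱ) + μ₂ * σ)))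
      (by positivity) ?_ z (by push_cast; linear_combination h4)
    have hlt : β * Λ * μ₅ * σ * ξ < μ₄ * (b * p + μ₃ * μ₅) * (μ₁ * (μ₂ + ϱ) + μ₂ * σ) := by
      rw [hR₀, div_lt_one (by positivity)] at hR₀lt
      exact hR₀lt
    rw [sub_pos,
      show ξ * (β * Λ * σ / (μ₁ * (μ₂ + ϱ) + μ₂ * σ)) =
        ξ * β * Λ * σ / (μ₁ * (μ₂ + ϱ) + μ₂ * σ) from by ring,
      div_lt_iff₀ hD,
      show (b * p / μ₅ + μ₃) * μ₄ = μ₄ * (b * p + μ₃ * μ₅) / μ₅ from by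
        field_simp,
      div_mul_eq_mul_div, lt_div_iff₀ hμ₅]
    nlinarith [hlt]
end

section
/- Suppose (Q*, T*, I*, V*, Z*) is an equilibrium of the within-host HIV model with I* > 0 and μ₅κ + I*(μ₅ − c) ≠ 0. Then A·I*² + B·I* + C = 0, where A = −βξ(μ₁+σ)(bp + μ₃(μ₅−c)), B = −βξ(bκp(μ₁+σ) + Λσ(c−μ₅) + κμ₃μ₅(μ₁+σ)) + μ₄(μ₁(μ₂+ϱ)+μ₂σ)(μ₃(c−μ₅) − bp), and C = βκΛμ₅σξ − κμ₄(bp+μ₃μ₅)(μ₁(μ₂+ϱ)+μ₂σ); moreover C = κμ₄(bp+μ₃μ₅)(μ₁(μ₂+ϱ)+μ₂σ)·(R₀ − 1). -/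
/-- The infected-cell coordinate `I*` of any infection equilibrium satisfies the
quadratic equation `A·I*² + B·I* + C = 0` with the explicit coefficients, and
`C = κμ₄(bp+μ₃μ₅)(μ₁(μ₂+ϱ)+μ₂σ)(R₀ − 1)`. -/
theorem hiv_infection_equilibrium_quadratic
    (Λ ϱ σ β p ξ b c κ μ₁ μ₂ μ₃ μ₄ μ₅ : ℝ)
    (hΛ : 0 < Λ) (hϱ : 0 < ϱ) (hσ : 0 < σ) (hβ : 0 < β) (hp : 0 < p)
    (hξ : 0 < ξ) (hb : 0 < b) (hc : 0 < c) (hκ : 0 < κ)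
    (hμ₁ : 0 < μ₁) (hμ₂ : 0 < μ₂) (hμ₃ : 0 < μ₃) (hμ₄ : 0 < μ₄) (hμ₅ : 0 < μ₅)
    (R₀ : ℝ)
    (hR₀ : R₀ = β * Λ * μ₅ * σ * ξ /
      (μ₄ * (b * p + μ₃ * μ₅) * (μ₁ * (μ₂ + ϱ) + μ₂ * σ)))
    (Q T I V Z : ℝ) (hI : 0 < I)
    (hden : μ₅ * κ + I * (μ₅ - c) ≠ 0)
    (e1 : Λ + ϱ * T - σ * Q - μ₁ * Q = 0)
    (e2 : σ * Q - β * T * V - ϱ * T - μ₂ * T = 0)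
    (e3 : β * T * V - μ₃ * I - p * I * Z = 0)
    (e4 : ξ * I - μ₄ * V = 0)
    (e5 : b + c * I * Z / (κ + I) - μ₅ * Z = 0)
    (A B C : ℝ)
    (hA : A = -(β * ξ) * (μ₁ + σ) * (b * p + μ₃ * (μ₅ - c)))
    (hB : B = -(β * ξ) * (b * κ * p * (μ₁ + σ) + Λ * σ * (c - μ₅) +
          κ * μ₃ * μ₅ * (μ₁ + σ)) +
        μ₄ * (μ₁ * (μ₂ + ϱ) + μ₂ * σ) * (μ₃ * (c - μ₅) - b * p))
    (hC : C = β * κ * Λ * μ₅ * σ * ξ -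
        κ * μ₄ * (b * p + μ₃ * μ₅) * (μ₁ * (μ₂ + ϱ) + μ₂ * σ)) :
    A * I ^ 2 + B * I + C = 0 ∧
    C = κ * μ₄ * (b * p + μ₃ * μ₅) * (μ₁ * (μ₂ + ϱ) + μ₂ * σ) * (R₀ - 1) := by
  have hI' : I ≠ 0 := ne_of_gt hI
  have hκI : κ + I ≠ 0 := by positivity
  have E5 : Z * (μ₅ * κ + I * (μ₅ - c)) = b * (κ + I) := by
    field_simp at e5
    linarith [e5]
  have ET : β * ξ * T = μ₄ * (μ₃ + p * Z) := by
    have h : I * (β * ξ * T) = I * (μ₄ * (μ₃ + p * Z)) := by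
      linear_combination μ₄ * e3 + β * T * e4
    exact mul_left_cancel₀ hI' h
  have EM : σ * Λ = (μ₁ + σ) * (β * T * V) + (μ₁ * (μ₂ + ϱ) + μ₂ * σ) * T := by
    linear_combination σ * e1 + (σ + μ₁) * e2
  constructor
  · rw [hA, hB, hC]
    linear_combination (μ₅ * κ + I * (μ₅ - c)) *
        (β * ξ * EM + (μ₁ + σ) * β * ξ * e3 +
          (μ₁ * (μ₂ + ϱ) + μ₂ * σ) * ET) +
      p * ((μ₁ + σ) * β * ξ * I + (μ₁ * (μ₂ + ϱ) + μ₂ * σ) * μ₄) * E5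
  · have hd : μ₄ * (b * p + μ₃ * μ₅) * (μ₁ * (μ₂ + ϱ) + μ₂ * σ) ≠ 0 := by positivity
    rw [hC, hR₀]
    field_simp
end

section
/- Assume μ₅ > c and R₀ > 1. Let A = −βξ(μ₁+σ)(bp + μ₃(μ₅−c)), B = −βξ(bκp(μ₁+σ) + Λσ(c−μ₅) + κμ₃μ₅(μ₁+σ)) + μ₄(μ₁(μ₂+ϱ)+μ₂σ)(μ₃(c−μ₅) − bp), C = κμ₄(bp+μ₃μ₅)(μ₁(μ₂+ϱ)+μ₂σ)·(R₀ − 1). Then B² − 4AC > 0 and the quadratic A·x² + B·x + C has exactly one positive real root, namely x = (−B − √(B² − 4AC))/(2A); its other real root is negative. -/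
/-- If `μ₅ > c` and `R₀ > 1`, then the equilibrium quadratic `A x² + B x + C` has
positive discriminant and exactly one positive real root, namely
`(−B − √(B²−4AC))/(2A)`; any other real root is negative. -/
theorem hiv_quadratic_unique_positive_root
    (Λ ϱ σ β p ξ b c κ μ₁ μ₂ μ₃ μ₄ μ₅ : ℝ)
    (hΛ : 0 < Λ) (hϱ : 0 < ϱ) (hσ : 0 < σ) (hβ : 0 < β) (hp : 0 < p)
    (hξ : 0 < ξ) (hb : 0 < b) (hc : 0 < c) (hκ : 0 < κ)
    (hμ₁ : 0 < μ₁) (hμ₂ : 0 < μ₂) (hμ₃ : 0 < μ₃) (hμ₄ : 0 < μ₄) (hμ₅ : 0 < μ₅)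
    (hμ₅c : μ₅ > c)
    (R₀ : ℝ)
    (hR₀ : R₀ = β * Λ * μ₅ * σ * ξ /
      (μ₄ * (b * p + μ₃ * μ₅) * (μ₁ * (μ₂ + ϱ) + μ₂ * σ)))
    (hR₀gt : R₀ > 1)
    (A B C : ℝ)
    (hA : A = -(β * ξ) * (μ₁ + σ) * (b * p + μ₃ * (μ₅ - c)))
    (hB : B = -(β * ξ) * (b * κ * p * (μ₁ + σ) + Λ * σ * (c - μ₅) +
          κ * μ₃ * μ₅ * (μ₁ + σ)) +
        μ₄ * (μ₁ * (μ₂ + ϱ) + μ₂ * σ) * (μ₃ * (c - μ₅) - b * p))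
    (hC : C = κ * μ₄ * (b * p + μ₃ * μ₅) * (μ₁ * (μ₂ + ϱ) + μ₂ * σ) * (R₀ - 1)) :
    B ^ 2 - 4 * A * C > 0 ∧
    (A * ((-B - Real.sqrt (B ^ 2 - 4 * A * C)) / (2 * A)) ^ 2 +
        B * ((-B - Real.sqrt (B ^ 2 - 4 * A * C)) / (2 * A)) + C = 0 ∧
      0 < (-B - Real.sqrt (B ^ 2 - 4 * A * C)) / (2 * A)) ∧
    (∀ x : ℝ, A * x ^ 2 + B * x + C = 0 →
      x = (-B - Real.sqrt (B ^ 2 - 4 * A * C)) / (2 * A) ∨ x < 0) := by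
  have h1 : 0 < b * p + μ₃ * (μ₅ - c) := by nlinarith
  have hAneg : A < 0 := by
    rw [hA]
    nlinarith [mul_pos (mul_pos (mul_pos hβ hξ) (by linarith : (0:ℝ) < μ₁ + σ)) h1]
  have hCpos : 0 < C := by
    rw [hC]
    have h2 : 0 < R₀ - 1 := by linarith
    have h3 : 0 < κ * μ₄ * (b * p + μ₃ * μ₅) * (μ₁ * (μ₂ + ϱ) + μ₂ * σ) := by positivity
    exact mul_pos h3 h2
  have hD : 0 < B ^ 2 - 4 * A * C := by
    nlinarith [sq_nonneg B, mul_pos (neg_pos.mpr hAneg) hCpos]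
  clear hA hB hC hR₀ hR₀gt h1
  set s := Real.sqrt (B ^ 2 - 4 * A * C) with hs
  have hs2 : s ^ 2 = B ^ 2 - 4 * A * C := Real.sq_sqrt hD.le
  have hspos : 0 < s := Real.sqrt_pos.mpr hD
  have hsB : |B| < s := by
    rw [hs]
    refine (Real.lt_sqrt (abs_nonneg B)).mpr ?_
    have h4 : A * C < 0 := mul_neg_of_neg_of_pos hAneg hCpos
    rw [sq_abs]; nlinarith [h4]
  have hnum : -B - s < 0 := by have := neg_abs_le B; have := neg_le_abs B; linarith
  have hnum2 : 0 < -B + s := by have := le_abs_self B; linarith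
  have hAne : A ≠ 0 := hAneg.ne
  have hdis : discrim A B C = s * s := by rw [discrim, ← hs2, pow_two]
  have hiff := fun x => quadratic_eq_zero_iff hAne hdis x
  refine ⟨hD, ⟨?_, ?_⟩, ?_⟩
  · have := (hiff ((-B - s) / (2 * A))).mpr (Or.inr rfl)
    linear_combination this
  · exact div_pos_of_neg_of_neg hnum (by linarith)
  · intro x hx
    rcases (hiff x).mp (by linear_combination hx) with h | h
    · right; rw [h]; exact div_neg_of_pos_of_neg hnum2 (by linarith)
    · left; exact h
end

section
/- Assume μ₅ > c and R₀ > 1. Then the within-host HIV model has exactly one equilibrium (Q*, T*, I*, V*, Z*) with all five coordinates strictly positive. -/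
/-- Key algebraic identity: the second equilibrium equation, after substituting the
formulas for `Q, T, V, Z` in terms of `I`, equals minus a quadratic in `I` over a
positive denominator. -/
lemma hiv_key (Λ ϱ σ β p ξ b c κ μ₁ μ₂ μ₃ μ₄ μ₅ I : ℝ)
    (hS : σ + μ₁ ≠ 0) (hβ : β ≠ 0) (hξ : ξ ≠ 0) (hμ₄ : μ₄ ≠ 0)
    (hden : μ₅*κ + (μ₅-c)*I ≠ 0) :
    σ * ((Λ + ϱ * (μ₄*(μ₃ + p * (b*(κ+I)/(μ₅*κ + (μ₅-c)*I)))/(β*ξ)))/(σ+μ₁))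
      - β * (μ₄*(μ₃ + p * (b*(κ+I)/(μ₅*κ + (μ₅-c)*I)))/(β*ξ)) * (ξ*I/μ₄)
      - ϱ * (μ₄*(μ₃ + p * (b*(κ+I)/(μ₅*κ + (μ₅-c)*I)))/(β*ξ))
      - μ₂ * (μ₄*(μ₃ + p * (b*(κ+I)/(μ₅*κ + (μ₅-c)*I)))/(β*ξ))
    = -(((μ₃*(μ₅-c)+p*b) * (β*ξ*(σ+μ₁))) * I^2
        + ((μ₃*(μ₅-c)+p*b) * ((μ₁*(μ₂+ϱ)+μ₂*σ)*μ₄)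
            + (μ₃*μ₅*κ+p*b*κ) * (β*ξ*(σ+μ₁)) - σ*Λ*β*ξ*(μ₅-c)) * I
        + (κ*((μ₃*μ₅+p*b) * ((μ₁*(μ₂+ϱ)+μ₂*σ)*μ₄)) - σ*Λ*β*ξ*μ₅*κ))
      / ((σ+μ₁)*(β*ξ)*(μ₅*κ + (μ₅-c)*I)) := by
  obtain ⟨D, hD⟩ : ∃ D, D = μ₅*κ + (μ₅-c)*I := ⟨_, rfl⟩
  rw [← hD] at hden ⊢
  field_simp
  rw [hD]
  ring

/-- A quadratic with positive leading coefficient and negative constant term has a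
unique positive root. -/
lemma quad_pos_root (A B C : ℝ) (hA : 0 < A) (hC : C < 0) :
    ∃! x : ℝ, 0 < x ∧ A*x^2 + B*x + C = 0 := by
  have hdisc : 0 < B^2 - 4*A*C := by nlinarith [sq_nonneg B]
  set s := Real.sqrt (B^2 - 4*A*C) with hs
  have hs2 : s^2 = B^2 - 4*A*C := Real.sq_sqrt hdisc.le
  have hs0 : 0 ≤ s := Real.sqrt_nonneg _
  have hsB : B < s := by nlinarith [sq_nonneg (s-B), sq_nonneg (s+B)]
  have hroot : A*((s-B)/(2*A))^2 + B*((s-B)/(2*A)) + C = 0 := by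
    field_simp
    linear_combination hs2
  refine ⟨(s-B)/(2*A), ⟨div_pos (by linarith) (by linarith), hroot⟩, ?_⟩
  rintro y ⟨hy, hy0⟩
  set x := (s-B)/(2*A) with hx
  have hxpos : 0 < x := div_pos (by linarith) (by linarith)
  have h : (y - x) * (A*(y+x)+B) = 0 := by linear_combination hy0 - hroot
  rcases mul_eq_zero.1 h with h' | h'
  · exact sub_eq_zero.1 h'
  · exfalso
    have hCval : C = A*y*x := by linear_combination hy0 - y*h'
    nlinarith [mul_pos (mul_pos hA hy) hxpos]

/-- Characterization of positive equilibria: a positive point is an equilibrium iff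
`I` is a positive root of an explicit quadratic and the other coordinates are given
by explicit formulas in `I`. -/
lemma hiv_char (Λ ϱ σ β p ξ b c κ μ₁ μ₂ μ₃ μ₄ μ₅ : ℝ)
    (hΛ : 0 < Λ) (hϱ : 0 < ϱ) (hσ : 0 < σ) (hβ : 0 < β) (hp : 0 < p)
    (hξ : 0 < ξ) (hb : 0 < b) (hc : 0 < c) (hκ : 0 < κ)
    (hμ₁ : 0 < μ₁) (hμ₂ : 0 < μ₂) (hμ₃ : 0 < μ₃) (hμ₄ : 0 < μ₄) (hμ₅ : 0 < μ₅)
    (hμ₅c : μ₅ > c) (Q T I V Z : ℝ) :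
    (0 < Q ∧ 0 < T ∧ 0 < I ∧ 0 < V ∧ 0 < Z ∧
      Λ + ϱ * T - σ * Q - μ₁ * Q = 0 ∧
      σ * Q - β * T * V - ϱ * T - μ₂ * T = 0 ∧
      β * T * V - μ₃ * I - p * I * Z = 0 ∧
      ξ * I - μ₄ * V = 0 ∧
      b + c * I * Z / (κ + I) - μ₅ * Z = 0) ↔
    (0 < I ∧
      ((μ₃*(μ₅-c)+p*b) * (β*ξ*(σ+μ₁))) * I^2
        + ((μ₃*(μ₅-c)+p*b) * ((μ₁*(μ₂+ϱ)+μ₂*σ)*μ₄)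
            + (μ₃*μ₅*κ+p*b*κ) * (β*ξ*(σ+μ₁)) - σ*Λ*β*ξ*(μ₅-c)) * I
        + (κ*((μ₃*μ₅+p*b) * ((μ₁*(μ₂+ϱ)+μ₂*σ)*μ₄)) - σ*Λ*β*ξ*μ₅*κ) = 0 ∧
      Z = b*(κ+I)/(μ₅*κ + (μ₅-c)*I) ∧
      V = ξ*I/μ₄ ∧
      T = μ₄*(μ₃ + p * (b*(κ+I)/(μ₅*κ + (μ₅-c)*I)))/(β*ξ) ∧
      Q = (Λ + ϱ * (μ₄*(μ₃ + p * (b*(κ+I)/(μ₅*κ + (μ₅-c)*I)))/(β*ξ)))/(σ+μ₁)) := by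
  have hμc : (0:ℝ) < μ₅ - c := sub_pos.2 hμ₅c
  have hS : (0:ℝ) < σ + μ₁ := by linarith
  constructor
  · rintro ⟨hQ, hT, hI, hV, hZ, e1, e2, e3, e4, e5⟩
    have hden : (0:ℝ) < μ₅*κ + (μ₅-c)*I := by positivity
    have hκI : (0:ℝ) < κ + I := by linarith
    have hVf : V = ξ*I/μ₄ := by
      rw [eq_div_iff hμ₄.ne']
      linarith
    have hZf : Z = b*(κ+I)/(μ₅*κ + (μ₅-c)*I) := by
      rw [eq_div_iff hden.ne']
      have e5' : c*I*Z = (μ₅*Z - b)*(κ+I) := by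
        have h := e5
        field_simp at h
        linarith
      linear_combination -e5'
    have hTf : T = μ₄*(μ₃ + p*Z)/(β*ξ) := by
      rw [eq_div_iff (by positivity : (β*ξ:ℝ) ≠ 0)]
      have e3' : I*(β*T*ξ) = I*(μ₄*(μ₃ + p*Z)) := by
        rw [hVf] at e3
        field_simp at e3
        linear_combination e3
      have := mul_left_cancel₀ hI.ne' e3'
      linear_combination this
    have hQf : Q = (Λ + ϱ*T)/(σ+μ₁) := by
      rw [eq_div_iff hS.ne']
      linarith
    rw [hZf] at hTf
    rw [hTf] at hQf
    refine ⟨hI, ?_, hZf, hVf, hTf, hQf⟩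
    have h := e2
    rw [hQf, hTf, hVf] at h
    rw [hiv_key Λ ϱ σ β p ξ b c κ μ₁ μ₂ μ₃ μ₄ μ₅ I hS.ne' hβ.ne' hξ.ne' hμ₄.ne' hden.ne'] at h
    rcases div_eq_zero_iff.1 h with h' | h'
    · exact neg_eq_zero.1 h'
    · exact absurd h' (by positivity)
  · rintro ⟨hI, hquad, hZf, hVf, hTf, hQf⟩
    have hden : (0:ℝ) < μ₅*κ + (μ₅-c)*I := by positivity
    have hκI : (0:ℝ) < κ + I := by linarith
    have hZpos : 0 < Z := by rw [hZf]; positivity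
    have hTpos : 0 < T := by
      rw [hTf]
      have : (0:ℝ) < b*(κ+I)/(μ₅*κ + (μ₅-c)*I) := by positivity
      positivity
    have hVpos : 0 < V := by rw [hVf]; positivity
    have hQpos : 0 < Q := by
      rw [hQf]
      have : (0:ℝ) < μ₄*(μ₃ + p * (b*(κ+I)/(μ₅*κ + (μ₅-c)*I)))/(β*ξ) := by positivity
      positivity
    refine ⟨hQpos, hTpos, hI, hVpos, hZpos, ?_, ?_, ?_, ?_, ?_⟩
    · rw [hQf, hTf]; field_simp; ring
    · rw [hQf, hTf, hVf,
        hiv_key Λ ϱ σ β p ξ b c κ μ₁ μ₂ μ₃ μ₄ μ₅ I hS.ne' hβ.ne' hξ.ne' hμ₄.ne' hden.ne',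
        hquad]
      simp
    · rw [hTf, hVf, hZf]; field_simp; ring
    · rw [hVf]; field_simp; ring
    · rw [hZf]; field_simp; ring

/-- If `μ₅ > c` and `R₀ > 1`, the within-host HIV model has exactly one equilibrium
with all five coordinates strictly positive. -/
theorem hiv_unique_positive_equilibrium
    (Λ ϱ σ β p ξ b c κ μ₁ μ₂ μ₃ μ₄ μ₅ : ℝ)
    (hΛ : 0 < Λ) (hϱ : 0 < ϱ) (hσ : 0 < σ) (hβ : 0 < β) (hp : 0 < p)
    (hξ : 0 < ξ) (hb : 0 < b) (hc : 0 < c) (hκ : 0 < κ)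
    (hμ₁ : 0 < μ₁) (hμ₂ : 0 < μ₂) (hμ₃ : 0 < μ₃) (hμ₄ : 0 < μ₄) (hμ₅ : 0 < μ₅)
    (hμ₅c : μ₅ > c)
    (R₀ : ℝ)
    (hR₀ : R₀ = β * Λ * μ₅ * σ * ξ /
      (μ₄ * (b * p + μ₃ * μ₅) * (μ₁ * (μ₂ + ϱ) + μ₂ * σ)))
    (hR₀gt : R₀ > 1) :
    ∃! E : ℝ × ℝ × ℝ × ℝ × ℝ,
      0 < E.1 ∧ 0 < E.2.1 ∧ 0 < E.2.2.1 ∧ 0 < E.2.2.2.1 ∧ 0 < E.2.2.2.2 ∧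
      Λ + ϱ * E.2.1 - σ * E.1 - μ₁ * E.1 = 0 ∧
      σ * E.1 - β * E.2.1 * E.2.2.2.1 - ϱ * E.2.1 - μ₂ * E.2.1 = 0 ∧
      β * E.2.1 * E.2.2.2.1 - μ₃ * E.2.2.1 - p * E.2.2.1 * E.2.2.2.2 = 0 ∧
      ξ * E.2.2.1 - μ₄ * E.2.2.2.1 = 0 ∧
      b + c * E.2.2.1 * E.2.2.2.2 / (κ + E.2.2.1) - μ₅ * E.2.2.2.2 = 0 := by
  have hμc : (0:ℝ) < μ₅ - c := sub_pos.2 hμ₅c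
  have hApos : 0 < (μ₃*(μ₅-c)+p*b) * (β*ξ*(σ+μ₁)) :=
    mul_pos (add_pos (mul_pos hμ₃ hμc) (mul_pos hp hb)) (by positivity)
  have hRineq : μ₄ * (b * p + μ₃ * μ₅) * (μ₁ * (μ₂ + ϱ) + μ₂ * σ) < β * Λ * μ₅ * σ * ξ := by
    have hden : (0:ℝ) < μ₄ * (b * p + μ₃ * μ₅) * (μ₁ * (μ₂ + ϱ) + μ₂ * σ) := by positivity
    rw [hR₀, gt_iff_lt, lt_div_iff₀ hden] at hR₀gt
    linarith
  have hCneg : κ*((μ₃*μ₅+p*b) * ((μ₁*(μ₂+ϱ)+μ₂*σ)*μ₄)) - σ*Λ*β*ξ*μ₅*κ < 0 := by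
    nlinarith [mul_pos hκ (sub_pos.2 hRineq)]
  obtain ⟨I0, ⟨hI0, hroot0⟩, huniq⟩ :=
    quad_pos_root ((μ₃*(μ₅-c)+p*b) * (β*ξ*(σ+μ₁)))
      ((μ₃*(μ₅-c)+p*b) * ((μ₁*(μ₂+ϱ)+μ₂*σ)*μ₄)
        + (μ₃*μ₅*κ+p*b*κ) * (β*ξ*(σ+μ₁)) - σ*Λ*β*ξ*(μ₅-c))
      (κ*((μ₃*μ₅+p*b) * ((μ₁*(μ₂+ϱ)+μ₂*σ)*μ₄)) - σ*Λ*β*ξ*μ₅*κ) hApos hCneg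
  refine ⟨((Λ + ϱ * (μ₄*(μ₃ + p * (b*(κ+I0)/(μ₅*κ + (μ₅-c)*I0)))/(β*ξ)))/(σ+μ₁),
          μ₄*(μ₃ + p * (b*(κ+I0)/(μ₅*κ + (μ₅-c)*I0)))/(β*ξ),
          I0, ξ*I0/μ₄, b*(κ+I0)/(μ₅*κ + (μ₅-c)*I0)), ?_, ?_⟩
  · exact (hiv_char Λ ϱ σ β p ξ b c κ μ₁ μ₂ μ₃ μ₄ μ₅ hΛ hϱ hσ hβ hp hξ hb hc hκ
      hμ₁ hμ₂ hμ₃ hμ₄ hμ₅ hμ₅c _ _ _ _ _).mpr ⟨hI0, hroot0, rfl, rfl, rfl, rfl⟩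
  · rintro ⟨Q, T, I, V, Z⟩ hE
    obtain ⟨hI, hroot, hZf, hVf, hTf, hQf⟩ :=
      (hiv_char Λ ϱ σ β p ξ b c κ μ₁ μ₂ μ₃ μ₄ μ₅ hΛ hϱ hσ hβ hp hξ hb hc hκ
        hμ₁ hμ₂ hμ₃ hμ₄ hμ₅ hμ₅c Q T I V Z).mp hE
    have hII : I = I0 := huniq I ⟨hI, hroot⟩
    subst hII
    subst hZf
    subst hVf
    subst hTf
    subst hQf
    rfl
end

section
/- Let α₁, α₂, α₃, α₄, α₅, α₆, μ₁, μ₄, σ, ϱ be positive reals with α₂ − ϱ > 0 and α₂ − α₆ > 0. Define ξ₁ = α₅ + μ₄ + α₁ + α₂ + σ + μ₁, ξ₂ = α₁α₂ + α₁α₅ + α₁μ₁ + α₁σ + α₂α₅ + α₂μ₁ + α₂μ₄ + α₃α₄ + α₅μ₁ + α₅μ₄ + α₅σ + μ₁μ₄ + μ₄σ + σ(α₂ − ϱ), and ξ₃ = α₁α₂α₅ + α₁α₂μ₁ + α₁α₅μ₁ + α₁α₅σ + α₁α₆μ₄ + α₂α₃α₄ + α₂α₅μ₁ + α₂α₅μ₄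 + α₂μ₁μ₄ + α₃α₄μ₁ + α₃α₄μ₄ + α₃α₄σ + α₅μ₁μ₄ + α₅μ₄σ + σ(α₁ + α₅ + μ₄)(α₂ − ϱ). Then ξ₁ξ₂ − ξ₃ > 0. -/
/-- The second Routh–Hurwitz quantity `ξ₁ξ₂ − ξ₃` is positive, given
`α₂ − ϱ > 0` and `α₂ − α₆ > 0`. -/
theorem hiv_routh_hurwitz_xi1xi2_sub_xi3_pos
    (α₁ α₂ α₃ α₄ α₅ α₆ μ₁ μ₄ σ ϱ : ℝ)
    (hα₁ : 0 < α₁) (hα₂ : 0 < α₂) (hα₃ : 0 < α₃) (hα₄ : 0 < α₄) (hα₅ : 0 < α₅)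
    (hα₆ : 0 < α₆) (hμ₁ : 0 < μ₁) (hμ₄ : 0 < μ₄) (hσ : 0 < σ) (hϱ : 0 < ϱ)
    (h₂ϱ : α₂ - ϱ > 0) (h₂₆ : α₂ - α₆ > 0)
    (ξ₁ ξ₂ ξ₃ : ℝ)
    (hξ₁ : ξ₁ = α₅ + μ₄ + α₁ + α₂ + σ + μ₁)
    (hξ₂ : ξ₂ = α₁ * α₂ + α₁ * α₅ + α₁ * μ₁ + α₁ * σ + α₂ * α₅ + α₂ * μ₁ +
        α₂ * μ₄ + α₃ * α₄ + α₅ * μ₁ + α₅ * μ₄ + α₅ * σ + μ₁ * μ₄ + μ₄ * σ +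
        σ * (α₂ - ϱ))
    (hξ₃ : ξ₃ = α₁ * α₂ * α₅ + α₁ * α₂ * μ₁ + α₁ * α₅ * μ₁ + α₁ * α₅ * σ +
        α₁ * α₆ * μ₄ + α₂ * α₃ * α₄ + α₂ * α₅ * μ₁ + α₂ * α₅ * μ₄ +
        α₂ * μ₁ * μ₄ + α₃ * α₄ * μ₁ + α₃ * α₄ * μ₄ + α₃ * α₄ * σ +
        α₅ * μ₁ * μ₄ + α₅ * μ₄ * σ + σ * (α₁ + α₅ + μ₄) * (α₂ - ϱ)) :
    ξ₁ * ξ₂ - ξ₃ > 0 := by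
  have key : ξ₁ * ξ₂ - ξ₃ =
      μ₄ * σ * σ +
      μ₄ * μ₄ * σ +
      2 * μ₁ * μ₄ * σ +
      μ₁ * μ₄ * μ₄ +
      μ₁ * μ₁ * μ₄ +
      (α₂ - ϱ) * σ * σ +
      (α₂ - ϱ) * μ₁ * σ +
      α₅ * σ * σ +
      2 * α₅ * μ₄ * σ +
      α₅ * μ₄ * μ₄ +
      2 * α₅ * μ₁ * σ +
      2 * α₅ * μ₁ * μ₄ +
      α₅ * μ₁ * μ₁ +
      α₅ * α₅ * σ +
      α₅ * α₅ * μ₄ +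
      α₅ * α₅ * μ₁ +
      α₃ * α₄ * α₅ +
      2 * α₂ * μ₄ * σ +
      α₂ * μ₄ * μ₄ +
      α₂ * μ₁ * σ +
      2 * α₂ * μ₁ * μ₄ +
      α₂ * μ₁ * μ₁ +
      α₂ * (α₂ - ϱ) * σ +
      2 * α₂ * α₅ * σ +
      2 * α₂ * α₅ * μ₄ +
      2 * α₂ * α₅ * μ₁ +
      α₂ * α₅ * α₅ +
      α₂ * α₂ * μ₄ +
      α₂ * α₂ * μ₁ +
      α₂ * α₂ * α₅ +
      α₁ * σ * σ +
      α₁ * μ₄ * (α₂ - α₆) +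
      2 * α₁ * μ₄ * σ +
      2 * α₁ * μ₁ * σ +
      2 * α₁ * μ₁ * μ₄ +
      α₁ * μ₁ * μ₁ +
      2 * α₁ * α₅ * σ +
      2 * α₁ * α₅ * μ₄ +
      2 * α₁ * α₅ * μ₁ +
      α₁ * α₅ * α₅ +
      α₁ * α₃ * α₄ +
      2 * α₁ * α₂ * σ +
      α₁ * α₂ * μ₄ +
      2 * α₁ * α₂ * μ₁ +
      2 * α₁ * α₂ * α₅ +
      α₁ * α₂ * α₂ +
      α₁ * α₁ * σ +
      α₁ * α₁ * μ₁ +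
      α₁ * α₁ * α₅ +
      α₁ * α₁ * α₂ := by
    subst hξ₁ hξ₂ hξ₃; ring
  rw [key]
  positivity
end

section
/- Let M be the 2×2 real matrix with rows (−μ₃ − bp/μ₅, βΛσ/(μ₁(μ₂+ϱ)+μ₂σ)) and (ξ, −μ₄). If R₀ > 1, then M has a real eigenvalue K > 0 admitting an eigenvector (x₁, x₂) with x₁ > 0 and x₂ > 0 (so M·x = K·x). -/
/-- If `R₀ > 1`, the Metzler matrix `M` appearing in the persistence argument has a
positive eigenvalue with a strictly positive eigenvector. -/
theorem hiv_metzler_positive_eigenvalue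
    (Λ β σ ξ b p ϱ μ₁ μ₂ μ₃ μ₄ μ₅ : ℝ)
    (hΛ : 0 < Λ) (hβ : 0 < β) (hσ : 0 < σ) (hξ : 0 < ξ) (hb : 0 < b) (hp : 0 < p)
    (hϱ : 0 < ϱ) (hμ₁ : 0 < μ₁) (hμ₂ : 0 < μ₂) (hμ₃ : 0 < μ₃) (hμ₄ : 0 < μ₄)
    (hμ₅ : 0 < μ₅)
    (R₀ : ℝ)
    (hR₀ : R₀ = β * Λ * μ₅ * σ * ξ /
      (μ₄ * (b * p + μ₃ * μ₅) * (μ₁ * (μ₂ + ϱ) + μ₂ * σ)))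
    (hR₀gt : R₀ > 1)
    (M : Matrix (Fin 2) (Fin 2) ℝ)
    (hM : M = !![-μ₃ - b * p / μ₅, β * Λ * σ / (μ₁ * (μ₂ + ϱ) + μ₂ * σ);
                 ξ, -μ₄]) :
    ∃ K : ℝ, 0 < K ∧ ∃ x : Fin 2 → ℝ, 0 < x 0 ∧ 0 < x 1 ∧ M.mulVec x = K • x := by
  obtain ⟨a, ha⟩ : ∃ a : ℝ, a = μ₃ + b * p / μ₅ := ⟨_, rfl⟩
  obtain ⟨c, hc⟩ : ∃ c : ℝ, c = β * Λ * σ / (μ₁ * (μ₂ + ϱ) + μ₂ * σ) := ⟨_, rfl⟩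
  have hD : 0 < μ₁ * (μ₂ + ϱ) + μ₂ * σ := by positivity
  have ha0 : 0 < a := by rw [ha]; positivity
  have hc0 : 0 < c := by rw [hc]; positivity
  -- from R₀ > 1 deduce c * ξ > a * μ₄
  have hkey : a * μ₄ < c * ξ := by
    have h1 : 1 < β * Λ * μ₅ * σ * ξ /
        (μ₄ * (b * p + μ₃ * μ₅) * (μ₁ * (μ₂ + ϱ) + μ₂ * σ)) := hR₀ ▸ hR₀gt
    have hden : 0 < μ₄ * (b * p + μ₃ * μ₅) * (μ₁ * (μ₂ + ϱ) + μ₂ * σ) := by positivity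
    rw [lt_div_iff₀ hden] at h1
    have ha' : a = (μ₃ * μ₅ + b * p) / μ₅ := by rw [ha]; field_simp
    rw [ha', hc, div_mul_eq_mul_div, div_mul_eq_mul_div, div_lt_div_iff₀ hμ₅ hD]
    nlinarith [h1]
  obtain ⟨s, hs⟩ : ∃ s : ℝ, s = Real.sqrt ((a + μ₄) ^ 2 + 4 * (c * ξ - a * μ₄)) := ⟨_, rfl⟩
  have hsq : s ^ 2 = (a + μ₄) ^ 2 + 4 * (c * ξ - a * μ₄) := by
    rw [hs, Real.sq_sqrt]; nlinarith
  have hsgt : a + μ₄ < s := by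
    have hs0 : 0 ≤ s := hs ▸ Real.sqrt_nonneg _
    nlinarith [hsq]
  obtain ⟨K, hK⟩ : ∃ K : ℝ, K = (-(a + μ₄) + s) / 2 := ⟨_, rfl⟩
  have hK0 : 0 < K := by rw [hK]; linarith
  have hquad : K ^ 2 + (a + μ₄) * K + (a * μ₄ - c * ξ) = 0 := by
    rw [hK]; linear_combination hsq / 4
  refine ⟨K, hK0, ![c, K + a], by simpa using hc0,
    by simpa using (by linarith : 0 < K + a), ?_⟩
  subst hM
  funext i
  have hA : -μ₃ - b * p / μ₅ = -a := by rw [ha]; ring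
  rw [hA, ← hc]
  fin_cases i <;>
    simp [Matrix.mulVec, dotProduct, Fin.sum_univ_two]
  · ring
  · linear_combination (-1 : ℝ) * hquad
end

section
/- Let Λ, ϱ, σ, μ₁, μ₂ be positive reals and let Q, T : ℝ → ℝ be differentiable functions satisfying, for all t ≥ 0, Q'(t) = Λ + ϱ·T(t) − (σ + μ₁)·Q(t) and T'(t) = σ·Q(t) − (ϱ + μ₂)·T(t), with Q(0) > 0 and T(0) > 0. Then (Q(t), T(t)) converges as t → ∞ to the equilibrium (Q*, T*) = (Λ(μ₂+ϱ)/(μ₁(μ₂+ϱ)+μ₂σ), Λσ/(μ₁(μ₂+ϱ)+μ₂σ)). -/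
open Filter

lemma exp_decay_aux {k : ℝ} (hk : k < 0) {f : ℝ → ℝ} (hf : Differentiable ℝ f)
    (hf' : ∀ t, 0 ≤ t → deriv f t = k * f t) : Tendsto f atTop (nhds 0) := by
  set g : ℝ → ℝ := fun t => f t * Real.exp (-k * t) with hg
  have hgdiff : Differentiable ℝ g := hf.mul (by fun_prop)
  have hgd : ∀ u : ℝ, 0 ≤ u → deriv g u = 0 := by
    intro u hu
    have h1 : HasDerivAt (fun t : ℝ => Real.exp (-k * t)) (-k * Real.exp (-k * u)) u := by
      have : HasDerivAt (fun t : ℝ => -k * t) (-k) u := by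
        simpa using (hasDerivAt_id u).const_mul (-k)
      exact this.exp.congr_deriv (by ring)
    have h2 : HasDerivAt f (k * f u) u := by
      have := (hf u).hasDerivAt
      rwa [hf' u hu] at this
    have := (h2.mul h1).deriv
    rw [show g = (f * fun t => Real.exp (-k * t)) from rfl, this]; ring
  have key : ∀ t, 0 ≤ t → g t = g 0 := by
    intro t ht
    have hconv : Convex ℝ (Set.Ici (0:ℝ)) := convex_Ici 0
    refine hconv.is_const_of_fderivWithin_eq_zero (hgdiff.differentiableOn) ?_ ht (Set.self_mem_Ici)
    intro u hu
    have hud : UniqueDiffWithinAt ℝ (Set.Ici (0:ℝ)) u := (uniqueDiffOn_Ici 0) u hu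
    rw [DifferentiableAt.fderivWithin (hgdiff u) hud]
    ext
    simp [hgd u hu]
  have heq : ∀ t, 0 ≤ t → f t = g 0 * Real.exp (k * t) := by
    intro t ht
    have h0 := key t ht
    have hg0 : g 0 = f 0 := by simp [hg]
    have : f t * Real.exp (-k * t) = f 0 := by rw [← hg0, ← h0]
    have hne : Real.exp (-k * t) > 0 := Real.exp_pos _
    have : f t = f 0 / Real.exp (-k * t) := by
      field_simp at this ⊢; linarith [this]
    rw [this, hg0, div_eq_iff hne.ne', mul_assoc, ← Real.exp_add]
    simp
  have hlim : Tendsto (fun t => g 0 * Real.exp (k * t)) atTop (nhds 0) := by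
    have h1 : Tendsto (fun t : ℝ => k * t) atTop atBot :=
      (tendsto_const_mul_atBot_of_neg hk).2 tendsto_id
    have := (Real.tendsto_exp_atBot).comp h1
    simpa using (this.const_mul (g 0)).congr (fun t => by simp [Function.comp])
  refine hlim.congr' ?_
  filter_upwards [eventually_ge_atTop (0:ℝ)] with t ht
  exact (heq t ht).symm

set_option maxHeartbeats 1000000 in
/-- Global convergence of the infection-free planar subsystem: every positive
solution of `Q' = Λ + ϱT − (σ+μ₁)Q`, `T' = σQ − (ϱ+μ₂)T` converges to the
equilibrium `(Q*, T*)`. -/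
theorem hiv_infection_free_subsystem_converges
    (Λ ϱ σ μ₁ μ₂ : ℝ)
    (hΛ : 0 < Λ) (hϱ : 0 < ϱ) (hσ : 0 < σ) (hμ₁ : 0 < μ₁) (hμ₂ : 0 < μ₂)
    (Q T : ℝ → ℝ)
    (hQ : Differentiable ℝ Q) (hT : Differentiable ℝ T)
    (hQ' : ∀ t, 0 ≤ t → deriv Q t = Λ + ϱ * T t - (σ + μ₁) * Q t)
    (hT' : ∀ t, 0 ≤ t → deriv T t = σ * Q t - (ϱ + μ₂) * T t)
    (hQ0 : 0 < Q 0) (hT0 : 0 < T 0) :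
    Tendsto (fun t => (Q t, T t)) atTop
      (nhds (Λ * (μ₂ + ϱ) / (μ₁ * (μ₂ + ϱ) + μ₂ * σ),
             Λ * σ / (μ₁ * (μ₂ + ϱ) + μ₂ * σ))) := by
  set a : ℝ := σ + μ₁ with ha
  set b : ℝ := ϱ + μ₂ with hb
  set s : ℝ := a + b with hs
  set p : ℝ := a * b - σ * ϱ with hp
  set d : ℝ := μ₁ * (μ₂ + ϱ) + μ₂ * σ with hd
  have hdpos : 0 < d := by positivity
  set Qs : ℝ := Λ * (μ₂ + ϱ) / d with hQs
  set Ts : ℝ := Λ * σ / d with hTs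
  have eq1 : Λ + ϱ * Ts - a * Qs = 0 := by
    rw [hQs, hTs, ha, hd]; field_simp; ring
  have eq2 : σ * Qs - b * Ts = 0 := by
    rw [hQs, hTs, hb, hd]; field_simp; ring
  have hppos : 0 < p := by rw [hp, ha, hb]; nlinarith
  have hDpos : 0 < s ^ 2 - 4 * p := by
    have : s ^ 2 - 4 * p = (a - b) ^ 2 + 4 * (σ * ϱ) := by rw [hs, hp]; ring
    rw [this]; positivity
  set r : ℝ := Real.sqrt (s ^ 2 - 4 * p) with hr
  have hr2 : r ^ 2 = s ^ 2 - 4 * p := Real.sq_sqrt hDpos.le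
  have hrpos : 0 < r := Real.sqrt_pos.2 hDpos
  have hspos : 0 < s := by rw [hs, ha, hb]; positivity
  have hrs : r < s := by nlinarith
  set l₁ : ℝ := (-s + r) / 2 with hl₁
  set l₂ : ℝ := (-s - r) / 2 with hl₂
  have hl₁neg : l₁ < 0 := by rw [hl₁]; linarith
  have hl₂neg : l₂ < 0 := by rw [hl₂]; linarith
  have char₁ : l₁ ^ 2 + s * l₁ + p = 0 := by rw [hl₁]; linear_combination hr2 / 4
  have char₂ : l₂ ^ 2 + s * l₂ + p = 0 := by rw [hl₂]; linear_combination hr2 / 4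
  -- the two eigen-functionals
  have key : ∀ l : ℝ, l ^ 2 + s * l + p = 0 → l < 0 →
      Tendsto (fun t => σ * (Q t - Qs) + (l + a) * (T t - Ts)) atTop (nhds 0) := by
    intro l hchar hlneg
    apply exp_decay_aux hlneg
    · exact ((hQ.sub_const Qs).const_mul σ).add ((hT.sub_const Ts).const_mul (l + a))
    · intro t ht
      have dQ : deriv (fun t => σ * (Q t - Qs)) t = σ * deriv Q t := by
        rw [deriv_const_mul _ (hQ.differentiableAt.sub_const Qs), deriv_sub_const]
      have dT : deriv (fun t => (l + a) * (T t - Ts)) t = (l + a) * deriv T t := by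
        rw [deriv_const_mul _ (hT.differentiableAt.sub_const Ts), deriv_sub_const]
      rw [deriv_fun_add (((hQ t).sub_const Qs).const_mul σ) (((hT t).sub_const Ts).const_mul (l + a)),
        dQ, dT, hQ' t ht, hT' t ht]
      have hsab : s = a + b := hs
      have hpab : p = a * b - σ * ϱ := hp
      linear_combination σ * eq1 + (l + a) * eq2 - (T t - Ts) * hchar
        - (T t - Ts) * l * hsab - (T t - Ts) * hpab
  have hf₁ := key l₁ char₁ hl₁neg
  have hf₂ := key l₂ char₂ hl₂neg
  have hTlim : Tendsto (fun t => T t - Ts) atTop (nhds 0) := by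
    have hsub := hf₁.sub hf₂
    have hne : l₁ - l₂ ≠ 0 := by rw [hl₁, hl₂]; intro h; nlinarith
    have h2 : Tendsto (fun x => (l₁ - l₂)⁻¹ * (σ * (Q x - Qs) + (l₁ + a) * (T x - Ts)
        - (σ * (Q x - Qs) + (l₂ + a) * (T x - Ts)))) atTop (nhds 0) := by
      simpa using hsub.const_mul (l₁ - l₂)⁻¹
    refine h2.congr (fun t => ?_)
    field_simp
    ring
  have hQlim : Tendsto (fun t => Q t - Qs) atTop (nhds 0) := by
    have h2 : Tendsto (fun x => σ⁻¹ * (σ * (Q x - Qs) + (l₁ + a) * (T x - Ts)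
        - (l₁ + a) * (T x - Ts))) atTop (nhds 0) := by
      simpa using (hf₁.sub (hTlim.const_mul (l₁ + a))).const_mul σ⁻¹
    refine h2.congr (fun t => ?_)
    field_simp
    ring
  have hQt : Tendsto Q atTop (nhds Qs) := by
    have := hQlim.add_const Qs
    rw [zero_add] at this
    exact this.congr (fun t => by ring)
  have hTt : Tendsto T atTop (nhds Ts) := by
    have := hTlim.add_const Ts
    rw [zero_add] at this
    exact this.congr (fun t => by ring)
  exact hQt.prodMk_nhds hTt
end
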